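/- Restricted SHSMs can be exponentially more succinct than HSMs and finite state machines: there exist a constant c > 0, a polynomial p, and for every n ∈ ℕ a restricted SHSM M_n with |M_n| ≤ p(n), such that every HSM H whose flat Kripke structure H^F is isomorphic to M_n^F satisfies |H| ≥ 2^{cn}, and every Kripke structure isomorphic to M_n^F has at least 2^{cn} states. -/

import Mathlib

/-- A Scope-dependent Hierarchical State Machine over `AP`.  Machines are indexed by
`Fin h` (index `i` represents the `(i+1)`-st machine `M_{i+1}` of the paper); the
expansion map returns `none` on nodes and `some j` on a box expanding to machine `j`,
with `j < i` (only lower-indexed machines).  Edges are plain edges `(u,v)` (from nodes)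
and box edges `((u,z),v)` (from a box `u` through an output vertex `z`). -/
structure SHSM (AP : Type) where
  h : ℕ
  hpos : 0 < h
  V : Fin h → Type
  Vfin : ∀ i, Fintype (V i)
  init : ∀ i, V i
  out : ∀ i, Set (V i)
  label : ∀ i, V i → Set AP
  expand : ∀ i, V i → Option (Fin h)
  expand_lt : ∀ i u j, expand i u = some j → (j : ℕ) < (i : ℕ)
  init_node : ∀ i, expand i (init i) = none
  out_node : ∀ i, ∀ z ∈ out i, expand i z = none
  Eplain : ∀ i, V i → V i → Prop
  Ebox : ∀ i, V i → ∀ j, V j → V i → Prop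
  Eplain_node : ∀ i u v, Eplain i u v → expand i u = none
  Ebox_ok : ∀ i u j z v, Ebox i u j z v → expand i u = some j ∧ z ∈ out j

namespace SHSM

variable {AP : Type}

instance (M : SHSM AP) (i : Fin M.h) : Fintype (M.V i) := M.Vfin i

/-- The disjoint union of all vertex sets of `M`. -/
abbrev Vt (M : SHSM AP) : Type := Σ i : Fin M.h, M.V i

/-- The index of the top-level machine `M_h`. -/
def top (M : SHSM AP) : Fin M.h := ⟨M.h - 1, Nat.sub_lt M.hpos Nat.one_pos⟩

/-- `x` is a node (it does not expand to any machine). -/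
def IsNode (M : SHSM AP) (x : M.Vt) : Prop := M.expand x.1 x.2 = none

/-- The expansion step relation: `u_{ℓ+1} ∈ V_{expand(u_ℓ)}`. -/
def stepRel (M : SHSM AP) : M.Vt → M.Vt → Prop :=
  fun a b => M.expand a.1 a.2 = some b.1

/-- A well-formed sequence of vertices `u₁ … u_m` (`m ≥ 1`) with
`u_{ℓ+1} ∈ V_{expand(u_ℓ)}`. -/
def WFSeq (M : SHSM AP) (l : List M.Vt) : Prop :=
  l ≠ [] ∧ l.Chain' M.stepRel

/-- A well-formed sequence which starts in machine `j` and ends at a node.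
For `j = M.top` these are exactly the complete well-formed sequences, i.e. the
states of the flat Kripke structure `M^F`; for general `j` they are the states of
the flat Kripke structure of the sub-SHSM `(M₁,…,M_j)`. -/
def CompleteAt (M : SHSM AP) (j : Fin M.h) (l : List M.Vt) : Prop :=
  M.WFSeq l ∧ (∃ x, l.head? = some x ∧ x.1 = j) ∧ (∃ x, l.getLast? = some x ∧ M.IsNode x)

/-- A complete well-formed sequence: a state of the flat Kripke structure `M^F`. -/
def Complete (M : SHSM AP) (l : List M.Vt) : Prop :=
  M.CompleteAt M.top l

/-- The transition relation of the flat Kripke structure `M^F`, given by the four kinds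
of moves induced by the edges of `M`: node to node, node to box, box to node (through an
output vertex), and box to box. -/
def FlatTrans (M : SHSM AP) (X Y : List M.Vt) : Prop :=
  (∃ (p : List M.Vt) (i : Fin M.h) (a b : M.V i),
      X = p ++ [⟨i, a⟩] ∧ Y = p ++ [⟨i, b⟩] ∧
      M.Eplain i a b ∧ M.expand i b = none) ∨
  (∃ (p : List M.Vt) (i : Fin M.h) (a b : M.V i) (j : Fin M.h),
      X = p ++ [⟨i, a⟩] ∧ Y = p ++ [⟨i, b⟩, ⟨j, M.init j⟩] ∧
      M.Eplain i a b ∧ M.expand i b = some j) ∨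
  (∃ (p : List M.Vt) (i : Fin M.h) (a : M.V i) (j : Fin M.h) (z : M.V j) (v : M.V i),
      X = p ++ [⟨i, a⟩, ⟨j, z⟩] ∧ Y = p ++ [⟨i, v⟩] ∧
      M.Ebox i a j z v ∧ M.expand i v = none) ∨
  (∃ (p : List M.Vt) (i : Fin M.h) (a : M.V i) (j : Fin M.h) (z : M.V j) (b : M.V i)
      (j' : Fin M.h),
      X = p ++ [⟨i, a⟩, ⟨j, z⟩] ∧ Y = p ++ [⟨i, b⟩, ⟨j', M.init j'⟩] ∧
      M.Ebox i a j z b ∧ M.expand i b = some j')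

/-- The label of a state of `M^F`: the union of the labels of the vertices occurring
in the sequence. -/
def flatLabel (M : SHSM AP) (l : List M.Vt) : Set AP :=
  {p | ∃ x ∈ l, p ∈ M.label x.1 x.2}

/-- The initial state `⟨in_h⟩` of `M^F`. -/
def initSeq (M : SHSM AP) : List M.Vt := [⟨M.top, M.init M.top⟩]

lemma initSeq_complete (M : SHSM AP) : M.Complete M.initSeq :=
  ⟨⟨by simp [initSeq], List.isChain_singleton _⟩,
   ⟨⟨M.top, M.init M.top⟩, rfl, rfl⟩,
   ⟨⟨M.top, M.init M.top⟩, by simp [initSeq], M.init_node M.top⟩⟩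

/-- The states of the flat Kripke structure `M^F`. -/
def States (M : SHSM AP) : Type := {l : List M.Vt // M.Complete l}

/-- `M` is an HSM: boxes carry no atomic propositions. -/
def IsHSM (M : SHSM AP) : Prop :=
  ∀ i (u : M.V i), M.expand i u ≠ none → M.label i u = ∅

/-- The size of `M`: total number of vertices plus total number of edges. -/
noncomputable def size (M : SHSM AP) : ℕ :=
  Fintype.card M.Vt
  + {e : Σ i : Fin M.h, M.V i × M.V i | M.Eplain e.1 e.2.1 e.2.2}.ncard
  + {e : Σ (i : Fin M.h) (j : Fin M.h), M.V i × M.V j × M.V i |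
       M.Ebox e.1 e.2.2.1 e.2.1 e.2.2.2.1 e.2.2.2.2}.ncard

/-- `expand⁺`: machine `j` belongs to the iterated expansion of vertex `u`. -/
inductive InExpandPlus (M : SHSM AP) : M.Vt → Fin M.h → Prop where
  | base {i : Fin M.h} {u : M.V i} {j : Fin M.h} :
      M.expand i u = some j → InExpandPlus M ⟨i, u⟩ j
  | step {i : Fin M.h} {u : M.V i} {j : Fin M.h} (u' : M.V j) {j' : Fin M.h} :
      M.expand i u = some j → InExpandPlus M ⟨j, u'⟩ j' → InExpandPlus M ⟨i, u⟩ j'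

/-- `u` is an ancestor of `v`: `v` lies in a machine belonging to `expand⁺(u)`. -/
def Ancestor (M : SHSM AP) (u v : M.Vt) : Prop :=
  M.InExpandPlus u v.1

/-- A restricted SHSM: labels of a vertex and of any of its descendants are disjoint. -/
def Restricted (M : SHSM AP) : Prop :=
  ∀ u v : M.Vt, M.Ancestor u v → M.label u.1 u.2 ∩ M.label v.1 v.2 = ∅

end SHSM

/-- The flat Kripke structures of `M` and `M'` are isomorphic: a bijection of states
mapping the initial state to the initial state and preserving transitions and labels. -/
def FlatIso {AP : Type} (M M' : SHSM AP) : Prop :=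
  ∃ f : M.States ≃ M'.States,
    f ⟨M.initSeq, M.initSeq_complete⟩ = ⟨M'.initSeq, M'.initSeq_complete⟩ ∧
    (∀ X Y : M.States, M.FlatTrans X.1 Y.1 ↔ M'.FlatTrans (f X).1 (f Y).1) ∧
    (∀ X : M.States, M.flatLabel X.1 = M'.flatLabel (f X).1)

/-- A Kripke structure over atomic propositions `AP` with state type `S`:
an initial state, a total transition relation, and a labeling. -/
structure Kripke (S AP : Type) where
  init : S
  R : S → S → Prop
  total : ∀ s, ∃ t, R s t
  L : S → Set AP

/-- The Kripke structure `K` is isomorphic to the flat Kripke structure `M^F`: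
a bijection of states mapping the initial state to the initial state and preserving
transitions and labels. -/
def KripkeFlatIso {S AP : Type} (K : Kripke S AP) (M : SHSM AP) : Prop :=
  ∃ f : S ≃ M.States,
    f K.init = ⟨M.initSeq, M.initSeq_complete⟩ ∧
    (∀ s t : S, K.R s t ↔ M.FlatTrans (f s).1 (f t).1) ∧
    (∀ s : S, K.L s = M.flatLabel (f s).1)

/-! ### The witness family -/

namespace Succinct

/-- The restricted SHSM `M_n`: machines indexed by `Fin (n+1)`, each with vertices
`Option Bool`; `none` is the initial node, `some b` is a box expanding to the previous
machine (a node in machine `0`), and `some true` in machine `i` is labeled `{i}`. -/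
def Mn (n : ℕ) : SHSM ℕ where
  h := n + 1
  hpos := Nat.succ_pos n
  V := fun _ => Option Bool
  Vfin := fun _ => inferInstance
  init := fun _ => none
  out := fun _ => ∅
  label := fun i u => if u = some true then {(i : ℕ)} else ∅
  expand := fun i u => match u with
    | none => none
    | some _ =>
        if h0 : (i : ℕ) = 0 then none
        else some ⟨(i : ℕ) - 1, lt_of_le_of_lt (Nat.sub_le _ _) i.isLt⟩
  expand_lt := by
    intro i u j hj
    cases u with
    | none => simp at hj
    | some b =>
      simp only at hj
      split at hj
      · simp at hj
      · rename_i h0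
        cases hj
        exact Nat.sub_lt (Nat.pos_of_ne_zero h0) Nat.one_pos
  init_node := fun _ => rfl
  out_node := by intro i z hz; simp at hz
  Eplain := fun _ _ _ => False
  Ebox := fun _ _ _ _ _ => False
  Eplain_node := by intro _ _ _ h; exact h.elim
  Ebox_ok := by intro _ _ _ _ _ h; exact h.elim

/-- The vertex sequence (state of `(Mn n)^F`) determined by bits `v`:
`⟨m, some (v (m-1))⟩ :: ⋯ :: [⟨0, none⟩]` for machines `m, m-1, …, 0`. -/
def mylist (n : ℕ) (v : ℕ → Bool) : (m : ℕ) → m < n + 1 → List (Mn n).Vt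
  | 0, h => [⟨⟨0, h⟩, none⟩]
  | (m+1), h => ⟨⟨m+1, h⟩, some (v m)⟩ :: mylist n v m (Nat.lt_of_succ_lt h)

lemma mylist_ne_nil (n : ℕ) (v : ℕ → Bool) (m : ℕ) (h : m < n + 1) :
    mylist n v m h ≠ [] := by
  cases m <;> simp [mylist]

lemma mylist_head? (n : ℕ) (v : ℕ → Bool) (m : ℕ) (h : m < n + 1) :
    ∃ y, (mylist n v m h).head? = some ⟨⟨m, h⟩, y⟩ := by
  cases m with
  | zero => exact ⟨none, rfl⟩
  | succ m => exact ⟨some (v m), rfl⟩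

lemma mylist_getLast? (n : ℕ) (v : ℕ → Bool) (m : ℕ) (h : m < n + 1) :
    (mylist n v m h).getLast? = some ⟨⟨0, Nat.succ_pos n⟩, none⟩ := by
  induction m with
  | zero => rfl
  | succ m ih =>
    rw [mylist, List.getLast?_cons, ih _]
    rfl

lemma mylist_chain' (n : ℕ) (v : ℕ → Bool) (m : ℕ) (h : m < n + 1) :
    (mylist n v m h).Chain' (Mn n).stepRel := by
  induction m with
  | zero => exact List.isChain_singleton _
  | succ m ih =>
    rw [mylist]; simp only [List.Chain', List.isChain_cons]
    refine ⟨?_, ih _⟩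
    intro b hb
    obtain ⟨y, hy⟩ := mylist_head? n v m (Nat.lt_of_succ_lt h)
    rw [hy] at hb
    cases hb
    show (Mn n).expand _ _ = _
    simp [Mn]

lemma mem_flatLabel_mylist (n : ℕ) (v : ℕ → Bool) (m : ℕ) (h : m < n + 1) (k : ℕ) :
    k ∈ (Mn n).flatLabel (mylist n v m h) ↔ ∃ j, j < m ∧ v j = true ∧ k = j + 1 := by
  induction m with
  | zero =>
    simp only [mylist, SHSM.flatLabel, Set.mem_setOf_eq, List.mem_singleton]
    constructor
    · rintro ⟨x, rfl, hx⟩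
      simp [Mn] at hx
    · rintro ⟨j, hj, _⟩; omega
  | succ m ih =>
    simp only [mylist, SHSM.flatLabel, Set.mem_setOf_eq, List.mem_cons]
    constructor
    · rintro ⟨x, hx | hx, hk⟩
      · subst hx
        simp only [Mn] at hk
        by_cases hv : v m = true
        · simp [hv] at hk
          exact ⟨m, Nat.lt_succ_self m, hv, hk⟩
        · simp [hv] at hk
      · have : k ∈ (Mn n).flatLabel (mylist n v m (Nat.lt_of_succ_lt h)) := ⟨x, hx, hk⟩
        obtain ⟨j, hj, hvj, hk⟩ := (ih _).mp this
        exact ⟨j, Nat.lt_succ_of_lt hj, hvj, hk⟩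
    · rintro ⟨j, hj, hvj, rfl⟩
      rcases Nat.lt_succ_iff_lt_or_eq.mp hj with hj | rfl
      · obtain ⟨x, hx, hk⟩ := (ih (Nat.lt_of_succ_lt h)).mpr ⟨j, hj, hvj, rfl⟩
        exact ⟨x, Or.inr hx, hk⟩
      · refine ⟨⟨⟨j+1, h⟩, some (v j)⟩, Or.inl rfl, ?_⟩
        simp [Mn, hvj]

/-- The full-length sequence is a state of `(Mn n)^F`. -/
lemma mylist_complete (n : ℕ) (v : ℕ → Bool) :
    (Mn n).Complete (mylist n v n (Nat.lt_succ_self n)) := by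
  refine ⟨⟨mylist_ne_nil n v n _, mylist_chain' n v n _⟩, ?_, ?_⟩
  · obtain ⟨y, hy⟩ := mylist_head? n v n (Nat.lt_succ_self n)
    exact ⟨_, hy, rfl⟩
  · exact ⟨_, mylist_getLast? n v n _, rfl⟩

def gstate (n : ℕ) (v : ℕ → Bool) : (Mn n).States :=
  ⟨mylist n v n (Nat.lt_succ_self n), mylist_complete n v⟩

/-- Extension of a bit vector to `ℕ → Bool`. -/
def vext {n : ℕ} (v : Fin n → Bool) : ℕ → Bool :=
  fun m => if h : m < n then v ⟨m, h⟩ else false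

lemma label_inj {n : ℕ} (v w : Fin n → Bool)
    (h : (Mn n).flatLabel (gstate n (vext v)).1 = (Mn n).flatLabel (gstate n (vext w)).1) :
    v = w := by
  funext i
  have hi := Set.ext_iff.mp h ((i : ℕ) + 1)
  simp only [gstate] at hi
  rw [mem_flatLabel_mylist, mem_flatLabel_mylist] at hi
  have hv : (∃ j, j < n ∧ vext v j = true ∧ (i:ℕ) + 1 = j + 1) ↔ v i = true := by
    constructor
    · rintro ⟨j, hj, hvj, hk⟩
      have : j = (i : ℕ) := by omega
      subst this
      simpa [vext, hj] using hvj
    · intro hvi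
      exact ⟨(i : ℕ), i.isLt, by simpa [vext, i.isLt] using hvi, rfl⟩
  have hw : (∃ j, j < n ∧ vext w j = true ∧ (i:ℕ) + 1 = j + 1) ↔ w i = true := by
    constructor
    · rintro ⟨j, hj, hvj, hk⟩
      have : j = (i : ℕ) := by omega
      subst this
      simpa [vext, hj] using hvj
    · intro hwi
      exact ⟨(i : ℕ), i.isLt, by simpa [vext, i.isLt] using hwi, rfl⟩
  have : v i = true ↔ w i = true := by rw [← hv, ← hw]; exact hi
  cases hvi : v i <;> cases hwi : w i <;> simp_all

/-- `InExpandPlus` decreases the machine index. -/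
lemma inExpandPlus_lt {AP : Type} (M : SHSM AP) (x : M.Vt) (j : Fin M.h)
    (h : M.InExpandPlus x j) : (j : ℕ) < (x.1 : ℕ) := by
  induction h with
  | base h => exact M.expand_lt _ _ _ h
  | step u' h _ ih => exact lt_trans ih (M.expand_lt _ _ _ h)

lemma Mn_restricted (n : ℕ) : (Mn n).Restricted := by
  intro u v h
  have hlt : (v.1 : ℕ) < (u.1 : ℕ) := inExpandPlus_lt _ _ _ h
  obtain ⟨i, ui⟩ := u
  obtain ⟨j, vj⟩ := v
  simp only at hlt
  show (Mn n).label i ui ∩ (Mn n).label j vj = ∅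
  simp only [Mn]
  split <;> split <;>
    simp_all [Set.singleton_inter_eq_empty]
  omega

lemma Mn_size (n : ℕ) : (Mn n).size = 3 * (n + 1) := by
  have h1 : {e : Σ i : Fin (Mn n).h, (Mn n).V i × (Mn n).V i |
      (Mn n).Eplain e.1 e.2.1 e.2.2} = ∅ := by
    ext e; simp [Mn]; exact Iff.rfl
  have h2 : {e : Σ (i : Fin (Mn n).h) (j : Fin (Mn n).h),
      (Mn n).V i × (Mn n).V j × (Mn n).V i |
      (Mn n).Ebox e.1 e.2.2.1 e.2.1 e.2.2.2.1 e.2.2.2.2} = ∅ := by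
    ext e; simp [Mn]; exact Iff.rfl
  rw [SHSM.size, h1, h2, Set.ncard_empty, Set.ncard_empty]
  show Fintype.card (Σ _ : Fin (n+1), Option Bool) + 0 + 0 = 3 * (n + 1)
  simp [Fintype.card_sigma, mul_comm]

/-- In an HSM all vertices of a state except the last are boxes, hence the label of a
state is the label of its last vertex. -/
lemma hsm_flatLabel {AP : Type} (H : SHSM AP) (hH : H.IsHSM) :
    ∀ (l : List H.Vt), l.Chain' H.stepRel → ∀ x, l.getLast? = some x →
      H.flatLabel l = H.label x.1 x.2 := by
  intro l
  induction l with
  | nil => intro _ x hx; simp at hx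
  | cons a t ih =>
    intro hc x hx
    cases t with
    | nil =>
      simp at hx
      subst hx
      ext p
      simp [SHSM.flatLabel]
    | cons b t' =>
      simp only [List.Chain', List.isChain_cons_cons] at hc
      have ha : H.label a.1 a.2 = ∅ := hH _ _ (by rw [hc.1]; simp)
      rw [List.getLast?_cons_cons] at hx
      have := ih hc.2 x hx
      ext p
      simp only [SHSM.flatLabel, Set.mem_setOf_eq, List.mem_cons] at this ⊢
      rw [Set.ext_iff] at this
      constructor
      · rintro ⟨y, rfl | hy, hp⟩
        · rw [ha] at hp; exact hp.elim
        · exact (this p).mp ⟨y, hy, hp⟩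
      · intro hp
        obtain ⟨y, hy, hp⟩ := (this p).mpr hp
        exact ⟨y, Or.inr hy, hp⟩

end Succinct

/-- Restricted SHSMs can be exponentially more succinct than HSMs and finite state
machines: there are a constant `c > 0`, a polynomial `p`, and restricted SHSMs `M_n` of
size at most `p(n)` such that every HSM whose flat Kripke structure is isomorphic to
`M_n^F` has size at least `2^{cn}`, and every Kripke structure isomorphic to `M_n^F` has
at least `2^{cn}` states. -/
theorem restricted_shsm_exp_succinct_vs_hsm :
    ∃ (AP : Type) (c : ℝ), 0 < c ∧
      ∃ (p : Polynomial ℕ) (Mfam : ℕ → SHSM AP),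
        ∀ n : ℕ,
          (Mfam n).Restricted ∧ (Mfam n).size ≤ p.eval n ∧
          (∀ H : SHSM AP, H.IsHSM → FlatIso H (Mfam n) →
            (2 : ℝ) ^ (c * n) ≤ (H.size : ℝ)) ∧
          (∀ (S : Type) (inst : Fintype S) (K : Kripke S AP),
            KripkeFlatIso K (Mfam n) →
            (2 : ℝ) ^ (c * n) ≤ (@Fintype.card S inst : ℝ)) := by
  refine ⟨ℕ, 1, one_pos, Polynomial.C 3 * Polynomial.X + Polynomial.C 3, Succinct.Mn, ?_⟩
  intro n
  have hpow : (2 : ℝ) ^ ((1 : ℝ) * (n : ℝ)) = ((2 ^ n : ℕ) : ℝ) := by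
    rw [one_mul, Real.rpow_natCast]
    push_cast
    ring
  have hcard : Fintype.card (Fin n → Bool) = 2 ^ n := by simp
  refine ⟨Succinct.Mn_restricted n, ?_, ?_, ?_⟩
  · rw [Succinct.Mn_size]
    simp only [Polynomial.eval_add, Polynomial.eval_mul, Polynomial.eval_C,
      Polynomial.eval_X]
    omega
  · rintro H hH ⟨f, hinit, htrans, hlab⟩
    have hlast : ∀ v : Fin n → Bool,
        ∃ x, (f.symm (Succinct.gstate n (Succinct.vext v))).1.getLast? = some x ∧
          H.IsNode x :=
      fun v => (f.symm (Succinct.gstate n (Succinct.vext v))).2.2.2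
    choose φ hφ1 _ using hlast
    have hlabφ : ∀ v, H.label (φ v).1 (φ v).2
        = (Succinct.Mn n).flatLabel (Succinct.gstate n (Succinct.vext v)).1 := by
      intro v
      rw [← Succinct.hsm_flatLabel H hH _
        (f.symm (Succinct.gstate n (Succinct.vext v))).2.1.2 _ (hφ1 v),
        hlab (f.symm (Succinct.gstate n (Succinct.vext v))), Equiv.apply_symm_apply]
    have hinj : Function.Injective φ := by
      intro v w hvw
      apply Succinct.label_inj
      rw [← hlabφ v, ← hlabφ w, hvw]
    have h1 : 2 ^ n ≤ Fintype.card H.Vt := by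
      rw [← hcard]
      exact Fintype.card_le_of_injective φ hinj
    have h2 : Fintype.card H.Vt ≤ H.size := by
      rw [SHSM.size]
      exact le_trans (Nat.le_add_right _ _) (Nat.le_add_right _ _)
    rw [hpow]
    exact_mod_cast le_trans h1 h2
  · rintro S inst K ⟨f, hinit, htrans, hlab⟩
    have hinj : Function.Injective
        (fun v : Fin n → Bool => f.symm (Succinct.gstate n (Succinct.vext v))) := by
      intro v w hvw
      apply Succinct.label_inj
      have hv := hlab (f.symm (Succinct.gstate n (Succinct.vext v)))
      have hw := hlab (f.symm (Succinct.gstate n (Succinct.vext w)))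
      rw [Equiv.apply_symm_apply] at hv hw
      rw [← hv, ← hw]
      exact congrArg K.L hvw
    have h1 : 2 ^ n ≤ Fintype.card S := by
      rw [← hcard]
      exact Fintype.card_le_of_injective _ hinj
    rw [hpow]
    exact_mod_cast h1
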